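/- arXiv:1503.06723 — 2 statements merged into one kernel-verified Lean document; each statement's English description precedes it below -/
import Mathlib

section
/- The model wrinkle map w_s is a submersion at every point outside the set {x = 0, z^2 + |y|^2 = 1}; that is, for every point (y,x,z) with x ≠ 0 or z^2 + |y|^2 ≠ 1, the derivative of w_s at (y,x,z) is surjective onto ℝ^q. -/
open Finset

private lemma aux_surj {Y Z : Type*} [NormedAddCommGroup Y] [NormedSpace ℝ Y]
    [NormedAddCommGroup Z] [NormedSpace ℝ Z]
    (ℓ : (Y × Z) →L[ℝ] ℝ) (u : Y × Z) (hu1 : u.1 = 0) (hu : ℓ u ≠ 0) :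
    Function.Surjective ((ContinuousLinearMap.fst ℝ Y Z).prod ℓ) := by
  rintro ⟨a, b⟩
  set v := ((a, 0) : Y × Z) + ((b - ℓ (a, 0)) / ℓ u) • u with hv
  refine ⟨v, ?_⟩
  have h1 : ((b - ℓ (a, 0)) / ℓ u) * ℓ u = b - ℓ (a, 0) := div_mul_cancel₀ _ hu
  have h2 : ((ContinuousLinearMap.fst ℝ Y Z).prod ℓ) v = (v.1, ℓ v) := rfl
  rw [h2]
  refine Prod.ext ?_ ?_
  · show v.1 = a
    rw [hv]
    simp [hu1]
  · show ℓ v = b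
    rw [hv, map_add, map_smul, smul_eq_mul, h1]
    ring

private lemma aux_pow {E : Type*} [NormedAddCommGroup E] [NormedSpace ℝ E]
    {f : E → ℝ} {f' : E →L[ℝ] ℝ} {x : E} (hf : HasFDerivAt f f' x) (k : ℕ) :
    HasFDerivAt (fun y => f y ^ k) (((k : ℝ) * f x ^ (k - 1)) • f') x :=
  (hasDerivAt_pow k (f x)).comp_hasFDerivAt x hf

/-- The model wrinkle map `w_s` is a submersion at every point outside
`{x = 0, z² + |y|² = 1}`: at every point with `x ≠ 0` or `z² + |y|² ≠ 1`, its
derivative is surjective onto ℝ^q = ℝ^{q-1} × ℝ. -/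
theorem stmt_1 (q n s : ℕ) (hq : 1 ≤ q) (hn : 1 ≤ n) (hs : s ≤ 2 * n)
    (w : ((Fin (q - 1) → ℝ) × (Fin (2 * n) → ℝ) × ℝ) → ((Fin (q - 1) → ℝ) × ℝ))
    (hw : ∀ p : (Fin (q - 1) → ℝ) × (Fin (2 * n) → ℝ) × ℝ,
      w p = (p.1,
        p.2.2 ^ 3 + 3 * ((∑ i, (p.1 i) ^ 2) - 1) * p.2.2
          - ∑ i ∈ univ.filter (fun i : Fin (2 * n) => (i : ℕ) < s), (p.2.1 i) ^ 2
          + ∑ i ∈ univ.filter (fun i : Fin (2 * n) => s ≤ (i : ℕ)), (p.2.1 i) ^ 2)) :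
    ∀ p : (Fin (q - 1) → ℝ) × (Fin (2 * n) → ℝ) × ℝ,
      (p.2.1 ≠ 0 ∨ p.2.2 ^ 2 + ∑ i, (p.1 i) ^ 2 ≠ 1) →
        Function.Surjective (fderiv ℝ w p) := by
  have hwf : w = fun p => (p.1,
        p.2.2 ^ 3 + 3 * ((∑ i, (p.1 i) ^ 2) - 1) * p.2.2
          - ∑ i ∈ univ.filter (fun i : Fin (2 * n) => (i : ℕ) < s), (p.2.1 i) ^ 2
          + ∑ i ∈ univ.filter (fun i : Fin (2 * n) => s ≤ (i : ℕ)), (p.2.1 i) ^ 2) :=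
    funext hw
  subst hwf
  clear hw
  intro p hp
  set πz : ((Fin (q - 1) → ℝ) × (Fin (2 * n) → ℝ) × ℝ) →L[ℝ] ℝ :=
    (ContinuousLinearMap.snd ℝ (Fin (2 * n) → ℝ) ℝ).comp
      (ContinuousLinearMap.snd ℝ (Fin (q - 1) → ℝ) ((Fin (2 * n) → ℝ) × ℝ)) with hπz
  have hz : HasFDerivAt (fun p : (Fin (q - 1) → ℝ) × (Fin (2 * n) → ℝ) × ℝ => p.2.2) πz p :=
    πz.hasFDerivAt
  set πy : Fin (q - 1) → ((Fin (q - 1) → ℝ) × (Fin (2 * n) → ℝ) × ℝ) →L[ℝ] ℝ := fun i =>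
    (ContinuousLinearMap.proj i).comp
      (ContinuousLinearMap.fst ℝ (Fin (q - 1) → ℝ) ((Fin (2 * n) → ℝ) × ℝ)) with hπy
  have hy : ∀ i, HasFDerivAt (fun p : (Fin (q - 1) → ℝ) × (Fin (2 * n) → ℝ) × ℝ => p.1 i)
      (πy i) p := fun i => (πy i).hasFDerivAt
  set πx : Fin (2 * n) → ((Fin (q - 1) → ℝ) × (Fin (2 * n) → ℝ) × ℝ) →L[ℝ] ℝ := fun i =>
    (ContinuousLinearMap.proj i).comp
      ((ContinuousLinearMap.fst ℝ (Fin (2 * n) → ℝ) ℝ).comp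
        (ContinuousLinearMap.snd ℝ (Fin (q - 1) → ℝ) ((Fin (2 * n) → ℝ) × ℝ))) with hπx
  have hx : ∀ i, HasFDerivAt (fun p : (Fin (q - 1) → ℝ) × (Fin (2 * n) → ℝ) × ℝ => p.2.1 i)
      (πx i) p := fun i => (πx i).hasFDerivAt
  have hS := HasFDerivAt.fun_sum (fun i (_ : i ∈ (univ : Finset (Fin (q - 1)))) => aux_pow (hy i) 2)
  have hf := ((((aux_pow hz 3).fun_add (((hS.sub_const 1).const_mul 3).fun_mul hz)).fun_sub
      (HasFDerivAt.fun_sum (fun i (_ : i ∈ univ.filter (fun i : Fin (2 * n) => (i : ℕ) < s)) =>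
        aux_pow (hx i) 2))).fun_add
      (HasFDerivAt.fun_sum (fun i (_ : i ∈ univ.filter (fun i : Fin (2 * n) => s ≤ (i : ℕ))) =>
        aux_pow (hx i) 2)))
  have hwd := (HasFDerivAt.prodMk hasFDerivAt_fst hf)
  rw [hwd.fderiv]
  rcases hp with h | h
  · obtain ⟨j, hj⟩ := Function.ne_iff.1 h
    refine aux_surj _ (0, Pi.single j 1, 0) rfl ?_
    simp only [ContinuousLinearMap.add_apply, ContinuousLinearMap.coe_sub',
      Pi.sub_apply, ContinuousLinearMap.smul_apply, ContinuousLinearMap.coe_comp',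
      Function.comp_apply, ContinuousLinearMap.coe_fst', ContinuousLinearMap.coe_snd',
      ContinuousLinearMap.proj_apply, ContinuousLinearMap.sum_apply, smul_eq_mul,
      ContinuousLinearMap.coe_smul', Pi.smul_apply, hπz, hπy, hπx]
    have hj' : p.2.1 j ≠ 0 := by simpa using hj
    simp only [Pi.zero_apply, mul_zero, Finset.sum_const_zero, add_zero, zero_add, pow_one,
      Pi.single_apply, mul_ite, mul_one, Finset.sum_ite_eq', Finset.mem_filter,
      Finset.mem_univ, true_and]
    rcases lt_or_ge (j : ℕ) s with hjs | hjs
    · rw [if_pos hjs, if_neg (by omega)]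
      intro hc
      apply hj'
      norm_num at hc
      linarith
    · rw [if_neg (by omega), if_pos hjs]
      intro hc
      apply hj'
      norm_num at hc
      linarith
  · refine aux_surj _ (0, 0, 1) rfl ?_
    simp only [ContinuousLinearMap.add_apply, ContinuousLinearMap.coe_sub',
      Pi.sub_apply, ContinuousLinearMap.smul_apply, ContinuousLinearMap.coe_comp',
      Function.comp_apply, ContinuousLinearMap.coe_fst', ContinuousLinearMap.coe_snd',
      ContinuousLinearMap.proj_apply, ContinuousLinearMap.sum_apply, smul_eq_mul,
      ContinuousLinearMap.coe_smul', Pi.smul_apply, hπz, hπy, hπx]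
    simp only [Pi.zero_apply, mul_zero, mul_one, Finset.sum_const_zero, add_zero, zero_add,
      sub_zero, pow_one]
    intro hc
    apply h
    norm_num at hc
    linarith
end

section
/- For an integer l ≥ 1, the intervals J_i of length 9/(16l) centered at (2i−1)/(2l), i = 1, …, l, are pairwise disjoint subsets of [0,1], and the restriction of γ_l(t) = t + sin(2πlt) to [0,1] ∖ ⋃ J_i has derivative bounded below: γ_l'(t) = 1 + 2πl·cos(2πlt) ≥ l for all t ∈ [0,1] with φ_l(t) = 1 and t ∉ ⋃ J_i. -/
open Set Real

set_option maxHeartbeats 1000000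

lemma aux_pi_sq : (9.85:ℝ) < π ^ 2 ∧ π ^ 4 < (99:ℝ) := by
  have h1 := Real.pi_gt_d6
  have h2 := Real.pi_lt_d2
  have p2' : π ^ 2 < (9.9225:ℝ) := by nlinarith
  constructor
  · nlinarith
  · nlinarith [p2', sq_nonneg (π ^ 2 - 9.9225)]

lemma aux_cos_lb : 1 / (2 * π) ≤ π / 16 - (π / 16) ^ 3 / 4 := by
  obtain ⟨p2, p4⟩ := aux_pi_sq
  rw [div_le_iff₀ (by positivity)]
  ring_nf
  nlinarith

/-- For `l ≥ 1`, the intervals `J_i` of length `9/(16l)` centered at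
`(2i−1)/(2l)`, `i = 1,…,l`, are pairwise disjoint subsets of `[0,1]`, and on the region
where the cutoff `φ_l` equals `1`, the derivative `γ_l'(t) = 1 + 2πl·cos(2πlt)` of
`γ_l(t) = t + sin(2πlt)` satisfies `γ_l'(t) ≥ l` for all `t ∈ [0,1] ∖ ⋃ J_i`. -/
theorem stmt_18 (l : ℕ) (hl : 1 ≤ l)
    (J : ℕ → Set ℝ)
    (hJ : ∀ i, J i = Icc ((2 * (i : ℝ) - 1) / (2 * l) - 9 / (32 * l))
      ((2 * (i : ℝ) - 1) / (2 * l) + 9 / (32 * l)))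
    (φ : ℝ → ℝ)
    (hφone : ∀ t ∈ Icc (1 / (8 * (l : ℝ))) (1 - 1 / (8 * (l : ℝ))), φ t = 1)
    (hφzero : ∀ t, t ∉ Icc (1 / (16 * (l : ℝ))) (1 - 1 / (16 * (l : ℝ))) → φ t = 0) :
    (∀ i ∈ Finset.Icc 1 l, J i ⊆ Icc (0 : ℝ) 1) ∧
      (∀ i ∈ Finset.Icc 1 l, ∀ j ∈ Finset.Icc 1 l, i ≠ j → Disjoint (J i) (J j)) ∧
      ∀ t ∈ Icc (0 : ℝ) 1, φ t = 1 → t ∉ ⋃ i ∈ Finset.Icc 1 l, J i →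
        (l : ℝ) ≤ 1 + 2 * π * l * Real.cos (2 * π * l * t) := by
  have hl0 : (0:ℝ) < l := by exact_mod_cast hl
  have hl1 : (1:ℝ) ≤ l := by exact_mod_cast hl
  have hden : (0:ℝ) < 32 * l := by positivity
  have hlo : ∀ i : ℕ, (2 * (i:ℝ) - 1) / (2 * l) - 9 / (32 * l) = (32 * (i:ℝ) - 25) / (32 * l) := by
    intro i; field_simp; ring
  have hhi : ∀ i : ℕ, (2 * (i:ℝ) - 1) / (2 * l) + 9 / (32 * l) = (32 * (i:ℝ) - 7) / (32 * l) := by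
    intro i; field_simp; ring
  refine ⟨?_, ?_, ?_⟩
  · intro i hi
    simp only [Finset.mem_Icc] at hi
    have h1 : (1:ℝ) ≤ i := by exact_mod_cast hi.1
    have h2 : (i:ℝ) ≤ l := by exact_mod_cast hi.2
    rw [hJ, hlo, hhi]
    apply Icc_subset_Icc
    · apply div_nonneg _ hden.le; linarith
    · rw [div_le_one hden]; linarith
  · intro i hi j hj hij
    simp only [Finset.mem_Icc] at hi hj
    rw [hJ, hJ, hlo, hhi, hlo, hhi, Set.disjoint_iff]
    rintro x ⟨⟨hx1, hx2⟩, ⟨hx3, hx4⟩⟩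
    exfalso
    rcases lt_or_gt_of_ne hij with h | h
    · have hc : (i:ℝ) + 1 ≤ j := by exact_mod_cast h
      have h6 : (32 * (j:ℝ) - 25) / (32 * l) ≤ (32 * (i:ℝ) - 7) / (32 * l) := le_trans hx3 hx2
      rw [div_le_div_iff₀ hden hden] at h6
      nlinarith
    · have hc : (j:ℝ) + 1 ≤ i := by exact_mod_cast h
      have h6 : (32 * (i:ℝ) - 25) / (32 * l) ≤ (32 * (j:ℝ) - 7) / (32 * l) := le_trans hx1 hx4
      rw [div_le_div_iff₀ hden hden] at h6
      nlinarith
  · intro t ht hφt hnot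
    have hts : t ∈ Icc (1 / (16 * (l : ℝ))) (1 - 1 / (16 * (l : ℝ))) := by
      by_contra h
      have := hφzero t h
      rw [hφt] at this
      norm_num at this
    obtain ⟨ht1, ht2⟩ := hts
    set u : ℝ := (l:ℝ) * t with hu
    have heq1 : (l:ℝ) * (1 / (16 * l)) = 1/16 := by field_simp
    have heq2 : (l:ℝ) * (1 - 1 / (16 * l)) = l - 1/16 := by field_simp
    have hu1 : (1:ℝ)/16 ≤ u := by
      have := mul_le_mul_of_nonneg_left ht1 hl0.le
      rw [heq1] at this; exact this
    have hu2 : u ≤ (l:ℝ) - 1/16 := by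
      have := mul_le_mul_of_nonneg_left ht2 hl0.le
      rw [heq2] at this; exact this
    have hnotJ : ∀ i : ℕ, 1 ≤ i → i ≤ l → ¬((i:ℝ) - 25/32 ≤ u ∧ u ≤ (i:ℝ) - 7/32) := by
      rintro i h1 h2 ⟨ha, hb⟩
      apply hnot
      simp only [Set.mem_iUnion, Finset.mem_Icc]
      refine ⟨i, ⟨h1, h2⟩, ?_⟩
      rw [hJ, hlo, hhi]
      have heq : t * (32 * (l:ℝ)) = 32 * u := by rw [hu]; ring
      constructor
      · rw [div_le_iff₀ hden]; linarith
      · rw [le_div_iff₀ hden]; linarith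
    set k : ℤ := round u with hk
    have hround := abs_le.mp (abs_sub_round u)
    have hkl : k ≤ (l:ℤ) := by
      have h' : (k:ℝ) < (l:ℝ) + 1 := by linarith [hround.1]
      have : k < (l:ℤ) + 1 := by exact_mod_cast h'
      omega
    have hk0 : 0 ≤ k := by
      have h' : (-1:ℝ) < (k:ℝ) := by linarith [hround.2]
      have : (-1:ℤ) < k := by exact_mod_cast h'
      omega
    have hkcast : ((k.toNat : ℝ)) = (k:ℝ) := by
      exact_mod_cast congrArg (Int.cast : ℤ → ℝ) (Int.toNat_of_nonneg hk0)
    have hclose : |u - k| ≤ 7/32 := by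
      rw [abs_le]
      constructor <;> by_contra h <;> push_neg at h
      · -- u < k - 7/32 : contradiction with J at i = k
        have hk1 : (1:ℤ) ≤ k := by
          have h' : (0:ℝ) < (k:ℝ) := by linarith
          have : (0:ℤ) < k := by exact_mod_cast h'
          omega
        refine hnotJ k.toNat (by omega) (by omega) ?_
        rw [hkcast]
        constructor
        · push_cast; linarith [hround.1]
        · push_cast; linarith
      · -- u > k + 7/32 : contradiction with J at i = k + 1
        have hkl' : k + 1 ≤ (l:ℤ) := by
          have h' : (k:ℝ) < (l:ℝ) := by linarith [hround.2]
          have : k < (l:ℤ) := by exact_mod_cast h'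
          omega
        refine hnotJ (k.toNat + 1) (by omega) (by omega) ?_
        constructor
        · push_cast [hkcast]; linarith
        · push_cast [hkcast]; linarith [hround.2]
    clear_value k u
    have hcos : Real.cos (2 * π * l * t) = Real.cos (2 * π * (u - k)) := by
      have he : 2 * π * l * t = 2 * π * (u - k) + k * (2 * π) := by rw [hu]; ring
      rw [he, Real.cos_add_int_mul_two_pi]
    have hpi : (3:ℝ) < π := by linarith [Real.pi_gt_d6]
    have hpi' : π < 3.15 := by linarith [Real.pi_lt_d2]
    have habs : |2 * π * (u - k)| ≤ 7 * π / 16 := by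
      rw [abs_mul, abs_of_nonneg (by positivity : (0:ℝ) ≤ 2 * π)]
      nlinarith [abs_nonneg (u - (k:ℝ))]
    have hcos2 : Real.cos (7 * π / 16) ≤ Real.cos (2 * π * (u - k)) := by
      rw [show Real.cos (2 * π * (u - k)) = Real.cos |2 * π * (u - (k:ℝ))| from
        (Real.cos_abs _).symm]
      exact Real.cos_le_cos_of_nonneg_of_le_pi (abs_nonneg _) (by nlinarith) habs
    have hsin : Real.cos (7 * π / 16) = Real.sin (π / 16) := by
      rw [← Real.sin_pi_div_two_sub]
      ring_nf
    have hsinlb : π / 16 - (π / 16)^3 / 4 < Real.sin (π / 16) :=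
      by have h1 := Real.sin_gt_sub_cube (x := π / 16) (by positivity); have h2 := pow_pos (by positivity : (0:ℝ) < π / 16) 3; linarith
    rw [hsin] at hcos2
    have hineq : 1 / (2 * π) ≤ Real.cos (2 * π * l * t) := by
      rw [hcos]
      linarith [hcos2, hsinlb, aux_cos_lb]
    have heqf : 2 * π * (l:ℝ) * (1 / (2 * π)) = l := by
      rw [mul_one_div, mul_comm (2 * π) (l:ℝ), mul_div_assoc,
        div_self (by positivity : (2:ℝ) * π ≠ 0), mul_one]
    linarith [mul_le_mul_of_nonneg_left hineq (by positivity : (0:ℝ) ≤ 2 * π * l), heqf]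
end
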